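/- Let $-\infty < a < b < \infty$, $-\infty < c < d < \infty$, and let $R_2$ be the second Riesz transform on $\mathbb{R}^2$ with kernel $K(x, y) = c_2 \frac{x_2 - y_2}{|x - y|^3}$. Then for $(x_1, x_2)$ outside the boundary of the rectangle $[a,b) \times [c,d)$, $R_2 \mathbf{1}_{[a,b)\times[c,d)}(x_1, x_2) = C\,\{ (\mathrm{arcsinh}\, z_{NW} - \mathrm{arcsinh}\, z_{NE}) - (\mathrm{arcsinh}\, z_{SW} - \mathrm{arcsinh}\, z_{SE}) \}$, where $z_{NW} = \frac{x_1 - a}{|x_2 - d|}$, $z_{NE} = \frac{x_1 - b}{|x_2 - d|}$, $z_{SW} = \frac{x_1 - a}{|x_2 - c|}$, $z_{SE} = \frac{x_1 - b}{|x_2 - c|}$, and $C > 0$ is an absolute constant. In particular, $R_2 \mathbf{1}_{[a,b)\times[c,d)}$ has only logarithmic singularities on the boundary of the rectangle. -/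

import Mathlib

open MeasureTheory Set Filter
open Real

noncomputable def R2trunc (a b c d : ℝ) (x : ℝ × ℝ) (ε : ℝ) : ℝ :=
  ∫ y in (Set.Ico a b ×ˢ Set.Ico c d) \ Metric.closedBall x ε,
    (Real.Gamma (3 / 2) / Real.pi ^ ((3 : ℝ) / 2)) *
      (x.2 - y.2) / (((x.1 - y.1) ^ 2 + (x.2 - y.2) ^ 2) ^ ((3 : ℝ) / 2))

noncomputable def riK (p q : ℝ) : ℝ × ℝ → ℝ :=
  fun y => (q - y.2) / ((p - y.1) ^ 2 + (q - y.2) ^ 2) ^ ((3:ℝ)/2)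

noncomputable def formVal (p q a b c d : ℝ) : ℝ :=
  (Real.arsinh ((p - a) / |q - d|) - Real.arsinh ((p - b) / |q - d|)) -
    (Real.arsinh ((p - a) / |q - c|) - Real.arsinh ((p - b) / |q - c|))

noncomputable def g1 (p q c d : ℝ) : ℝ → ℝ :=
  fun y1 => ((p - y1) ^ 2 + (q - d) ^ 2) ^ (-(1:ℝ)/2)
    - ((p - y1) ^ 2 + (q - c) ^ 2) ^ (-(1:ℝ)/2)

lemma riK_contOn (p q : ℝ) {S : Set (ℝ × ℝ)}
    (h : ∀ y ∈ S, (p - y.1) ^ 2 + (q - y.2) ^ 2 ≠ 0) :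
    ContinuousOn (riK p q) S := by
  intro y hy
  apply ContinuousWithinAt.div (Continuous.continuousWithinAt (by fun_prop))
  · exact ContinuousWithinAt.rpow_const (Continuous.continuousWithinAt (by fun_prop))
      (Or.inl (h y hy))
  · exact (Real.rpow_pos_of_pos
      (lt_of_le_of_ne (by positivity) (Ne.symm (h y hy))) _).ne'

lemma contOn (s q : ℝ) {S : Set ℝ} (h : ∀ t ∈ S, s ^ 2 + (q - t) ^ 2 ≠ 0) :
    ContinuousOn (fun t => (q - t) / (s ^ 2 + (q - t) ^ 2) ^ ((3:ℝ)/2)) S := by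
  intro t ht
  apply ContinuousWithinAt.div (Continuous.continuousWithinAt (by fun_prop))
  · exact ContinuousWithinAt.rpow_const (Continuous.continuousWithinAt (by fun_prop))
      (Or.inl (h t ht))
  · exact (Real.rpow_pos_of_pos (lt_of_le_of_ne (by positivity) (Ne.symm (h t ht))) _).ne'

lemma integrableOn_ker (p q : ℝ) {δ : ℝ} (hδ : 0 < δ) {S : Set (ℝ × ℝ)}
    (hSm : MeasurableSet S) (hS : volume S ≠ ⊤)
    (hb : ∀ y ∈ S, δ ^ 2 ≤ (p - y.1) ^ 2 + (q - y.2) ^ 2) :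
    IntegrableOn (riK p q) S := by
  have hcont : ContinuousOn (riK p q) S := by
    apply riK_contOn
    intro y hy
    exact ne_of_gt (lt_of_lt_of_le (by positivity) (hb y hy))
  refine ⟨hcont.aestronglyMeasurable hSm, ?_⟩
  apply HasFiniteIntegral.restrict_of_bounded (C := (δ ^ 2)⁻¹) hS.lt_top
  filter_upwards [ae_restrict_mem hSm] with y hy
  have hD : δ ^ 2 ≤ (p - y.1) ^ 2 + (q - y.2) ^ 2 := hb y hy
  set D : ℝ := (p - y.1) ^ 2 + (q - y.2) ^ 2 with hDdef
  have hD0 : 0 < D := lt_of_lt_of_le (by positivity) hD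
  have h32 : D ^ ((3:ℝ)/2) = Real.sqrt D * D := by
    rw [show ((3:ℝ)/2) = 1/2 + 1 by norm_num, Real.rpow_add hD0, Real.rpow_one,
      ← Real.sqrt_eq_rpow]
  have habs : |q - y.2| ≤ Real.sqrt D := by
    apply Real.abs_le_sqrt; nlinarith [sq_nonneg (p - y.1)]
  have hsq : 0 < Real.sqrt D := Real.sqrt_pos.2 hD0
  have : ‖riK p q y‖ = |q - y.2| / (Real.sqrt D * D) := by
    rw [show riK p q y = (q - y.2) / ((p - y.1) ^ 2 + (q - y.2) ^ 2) ^ ((3:ℝ)/2) from rfl, Real.norm_eq_abs, abs_div, h32]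
    congr 1
    exact abs_of_pos (by positivity)
  rw [this]
  calc |q - y.2| / (Real.sqrt D * D) ≤ Real.sqrt D / (Real.sqrt D * D) := by
        gcongr
    _ = D⁻¹ := by field_simp
    _ ≤ (δ ^ 2)⁻¹ := by gcongr

lemma hasDerivAt_phi (s q : ℝ) {t : ℝ} (h : s ^ 2 + (q - t) ^ 2 ≠ 0) :
    HasDerivAt (fun t => (s ^ 2 + (q - t) ^ 2) ^ (-(1:ℝ)/2))
      ((q - t) / (s ^ 2 + (q - t) ^ 2) ^ ((3:ℝ)/2)) t := by
  have hu : HasDerivAt (fun t => s ^ 2 + (q - t) ^ 2) (-(2 * (q - t))) t := by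
    have h1 : HasDerivAt (fun t : ℝ => q - t) (-1) t := by
      exact (hasDerivAt_id' t).const_sub q
    exact ((hasDerivAt_const t (s ^ 2)).add ((h1.pow 2))).congr_deriv (by norm_num)
  have h0 : 0 < s ^ 2 + (q - t) ^ 2 := lt_of_le_of_ne (by positivity) (Ne.symm h)
  have := (Real.hasDerivAt_rpow_const (p := -(1:ℝ)/2) (Or.inl h)).comp t hu
  refine this.congr_deriv ?_
  have h1 : (-(1:ℝ)/2 - 1) = -((3:ℝ)/2) := by norm_num
  rw [h1, Real.rpow_neg h0.le]
  have h2 : (0:ℝ) < (s ^ 2 + (q - t) ^ 2) ^ ((3:ℝ)/2) := Real.rpow_pos_of_pos h0 _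
  field_simp

lemma inner_int (s q : ℝ) {c' d' : ℝ}
    (h : ∀ t ∈ Set.uIcc c' d', s ^ 2 + (q - t) ^ 2 ≠ 0) :
    ∫ t in c'..d', (q - t) / (s ^ 2 + (q - t) ^ 2) ^ ((3:ℝ)/2)
      = (s ^ 2 + (q - d') ^ 2) ^ (-(1:ℝ)/2) - (s ^ 2 + (q - c') ^ 2) ^ (-(1:ℝ)/2) := by
  refine intervalIntegral.integral_eq_sub_of_hasDerivAt
    (fun t ht => hasDerivAt_phi s q (h t ht)) ?_
  apply ContinuousOn.intervalIntegrable
  intro t ht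
  have h0 : 0 < s ^ 2 + (q - t) ^ 2 := lt_of_le_of_ne (by positivity) (Ne.symm (h t ht))
  apply ContinuousWithinAt.div
  · exact (Continuous.continuousWithinAt (by fun_prop))
  · apply ContinuousWithinAt.rpow_const
    · exact (Continuous.continuousWithinAt (by fun_prop))
    · exact Or.inl (h t ht)
  · exact (Real.rpow_pos_of_pos h0 _).ne'

lemma hasDerivAt_psi {h : ℝ} (hh : 0 < h) (p : ℝ) (y : ℝ) :
    HasDerivAt (fun y => -Real.arsinh ((p - y) / h))
      (((p - y) ^ 2 + h ^ 2) ^ (-(1:ℝ)/2)) y := by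
  have h1 : HasDerivAt (fun y : ℝ => (p - y) / h) (-h⁻¹) y := by
    have : HasDerivAt (fun y : ℝ => p - y) (-1) y := by
      exact (hasDerivAt_id' y).const_sub p
    simpa [div_eq_mul_inv] using this.mul_const h⁻¹
  have := ((Real.hasDerivAt_arsinh _).comp y h1).neg
  refine this.congr_deriv ?_
  have hs : Real.sqrt (1 + ((p - y) / h) ^ 2) = Real.sqrt ((p - y) ^ 2 + h ^ 2) / h := by
    rw [eq_div_iff hh.ne', ← Real.sqrt_sq hh.le, ← Real.sqrt_mul (by positivity)]
    congr 1
    field_simp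
    rw [Real.sqrt_sq hh.le]; ring
  rw [hs]
  rw [show ((-1:ℝ)/2) = -(1/2 : ℝ) by norm_num, Real.rpow_neg (by positivity), ← Real.sqrt_eq_rpow]
  have h2 : (0:ℝ) < Real.sqrt ((p - y) ^ 2 + h ^ 2) := Real.sqrt_pos.2 (by positivity)
  field_simp

lemma outer_int (p : ℝ) (a b : ℝ) {hc hd : ℝ} (hhc : 0 < hc) (hhd : 0 < hd) :
    ∫ y in a..b, (((p - y) ^ 2 + hd ^ 2) ^ (-(1:ℝ)/2) - ((p - y) ^ 2 + hc ^ 2) ^ (-(1:ℝ)/2))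
      = (Real.arsinh ((p - a) / hd) - Real.arsinh ((p - b) / hd)) -
        (Real.arsinh ((p - a) / hc) - Real.arsinh ((p - b) / hc)) := by
  have key : ∫ y in a..b, (((p - y) ^ 2 + hd ^ 2) ^ (-(1:ℝ)/2) - ((p - y) ^ 2 + hc ^ 2) ^ (-(1:ℝ)/2))
      = ((-Real.arsinh ((p - b) / hd)) - (-Real.arsinh ((p - b) / hc))) -
        ((-Real.arsinh ((p - a) / hd)) - (-Real.arsinh ((p - a) / hc))) := by
    refine intervalIntegral.integral_eq_sub_of_hasDerivAt
      (fun y hy => ((hasDerivAt_psi hhd p y).sub (hasDerivAt_psi hhc p y))) ?_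
    apply ContinuousOn.intervalIntegrable
    apply ContinuousOn.sub <;>
    · intro y hy
      apply ContinuousWithinAt.rpow_const
      · exact (Continuous.continuousWithinAt (by fun_prop))
      · exact Or.inl (by positivity)
  rw [key]; ring

lemma inner_full (s q : ℝ) {c d : ℝ} (hcd : c ≤ d)
    (hne : ∀ t ∈ Set.Icc c d, s ^ 2 + (q - t) ^ 2 ≠ 0) :
    ∫ t in Set.Ico c d, (q - t) / (s ^ 2 + (q - t) ^ 2) ^ ((3:ℝ)/2)
      = (s ^ 2 + (q - d) ^ 2) ^ (-(1:ℝ)/2) - (s ^ 2 + (q - c) ^ 2) ^ (-(1:ℝ)/2) := by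
  rw [integral_Ico_eq_integral_Ioo, ← integral_Ioc_eq_integral_Ioo,
    ← intervalIntegral.integral_of_le hcd]
  exact inner_int s q (by rwa [Set.uIcc_of_le hcd])

lemma inner_zero (s q : ℝ) {ε : ℝ} (hs : s ≠ 0) (hε : 0 ≤ ε) :
    ∫ t in Set.Icc (q - ε) (q + ε), (q - t) / (s ^ 2 + (q - t) ^ 2) ^ ((3:ℝ)/2) = 0 := by
  have h : q - ε ≤ q + ε := by linarith
  rw [MeasureTheory.integral_Icc_eq_integral_Ioc, ← intervalIntegral.integral_of_le h]
  rw [inner_int s q (fun t _ => by positivity)]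
  rw [show q - (q + ε) = -ε by ring, show q - (q - ε) = ε by ring, neg_sq, sub_self]

lemma inner_annulus (s q : ℝ) {c d ε : ℝ} (hε : 0 < ε) (h1 : c < q - ε) (h2 : q + ε < d) :
    ∫ t in Set.Ico c d \ Set.Icc (q - ε) (q + ε),
        (q - t) / (s ^ 2 + (q - t) ^ 2) ^ ((3:ℝ)/2)
      = (s ^ 2 + (q - d) ^ 2) ^ (-(1:ℝ)/2) - (s ^ 2 + (q - c) ^ 2) ^ (-(1:ℝ)/2) := by
  have hset : Set.Ico c d \ Set.Icc (q - ε) (q + ε)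
      = Set.Ico c (q - ε) ∪ Set.Ioo (q + ε) d := by
    ext t
    simp only [Set.mem_diff, Set.mem_Ico, Set.mem_Icc, Set.mem_union, Set.mem_Ioo, not_and,
      not_le]
    constructor
    · rintro ⟨⟨htc, htd⟩, h⟩
      by_cases hq : q - ε ≤ t
      · exact Or.inr ⟨h hq, htd⟩
      · exact Or.inl ⟨htc, not_le.1 hq⟩
    · rintro (⟨htc, htd⟩ | ⟨htc, htd⟩)
      · exact ⟨⟨htc, by linarith⟩, fun h => absurd h (by linarith)⟩
      · exact ⟨⟨by linarith, htd⟩, fun _ => htc⟩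
  have hpos1 : ∀ t ∈ Set.Icc c (q - ε), s ^ 2 + (q - t) ^ 2 ≠ 0 := by
    intro t ht
    have : ε ≤ q - t := by linarith [ht.2]
    nlinarith [sq_nonneg s]
  have hpos2 : ∀ t ∈ Set.Icc (q + ε) d, s ^ 2 + (q - t) ^ 2 ≠ 0 := by
    intro t ht
    have : q - t ≤ -ε := by linarith [ht.1]
    nlinarith [sq_nonneg s]
  have hi1 : IntegrableOn (fun t => (q - t) / (s ^ 2 + (q - t) ^ 2) ^ ((3:ℝ)/2))
      (Set.Ico c (q - ε)) := by
    exact ((contOn s q hpos1).integrableOn_Icc).mono_set Set.Ico_subset_Icc_self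
  have hi2 : IntegrableOn (fun t => (q - t) / (s ^ 2 + (q - t) ^ 2) ^ ((3:ℝ)/2))
      (Set.Ioo (q + ε) d) := by
    exact ((contOn s q hpos2).integrableOn_Icc).mono_set Set.Ioo_subset_Icc_self
  have hdisj : Disjoint (Set.Ico c (q - ε)) (Set.Ioo (q + ε) d) := by
    rw [Set.disjoint_left]
    rintro t ⟨_, ht2⟩ ⟨ht3, _⟩
    linarith
  rw [hset, setIntegral_union hdisj measurableSet_Ioo hi1 hi2]
  rw [integral_Ico_eq_integral_Ioo, ← integral_Ioc_eq_integral_Ioo,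
    ← intervalIntegral.integral_of_le (by linarith : c ≤ q - ε),
    ← integral_Ioc_eq_integral_Ioo,
    ← intervalIntegral.integral_of_le (by linarith : q + ε ≤ d)]
  rw [inner_int s q (by rwa [Set.uIcc_of_le (by linarith : c ≤ q - ε)]),
    inner_int s q (by rwa [Set.uIcc_of_le (by linarith : q + ε ≤ d)])]
  rw [show q - (q - ε) = ε by ring, show q - (q + ε) = -ε by ring, neg_sq]
  ring

lemma outer_step (p q : ℝ) {a b c d : ℝ} (hab : a ≤ b) (hqc : q ≠ c) (hqd : q ≠ d) :
    ∫ y1 in Set.Ico a b, g1 p q c d y1 = formVal p q a b c d := by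
  have hc : 0 < |q - c| := abs_pos.2 (sub_ne_zero.2 hqc)
  have hd : 0 < |q - d| := abs_pos.2 (sub_ne_zero.2 hqd)
  rw [integral_Ico_eq_integral_Ioo, ← integral_Ioc_eq_integral_Ioo,
    ← intervalIntegral.integral_of_le hab]
  have h := outer_int p a b hc hd
  simp only [sq_abs] at h
  simp only [g1, formVal]
  exact h

lemma vol_rect_ne_top (a b c d : ℝ) {S : Set (ℝ × ℝ)}
    (hsub : S ⊆ Set.Icc a b ×ˢ Set.Icc c d) : volume S ≠ ⊤ :=
  ne_top_of_le_ne_top (isCompact_Icc.prod isCompact_Icc).measure_lt_top.ne (measure_mono hsub)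

lemma rect_value (p q : ℝ) {a b c d δ : ℝ} (hab : a < b) (hcd : c < d)
    (hqc : q ≠ c) (hqd : q ≠ d) (hδ : 0 < δ)
    (hbdd : ∀ y ∈ (Set.Icc a b ×ˢ Set.Icc c d : Set (ℝ × ℝ)),
      δ ^ 2 ≤ (p - y.1) ^ 2 + (q - y.2) ^ 2) :
    ∫ y in Set.Ico a b ×ˢ Set.Ico c d, riK p q y = formVal p q a b c d := by
  have hsub : (Set.Ico a b ×ˢ Set.Ico c d : Set (ℝ × ℝ)) ⊆ Set.Icc a b ×ˢ Set.Icc c d :=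
    Set.prod_mono Set.Ico_subset_Icc_self Set.Ico_subset_Icc_self
  have hInt : IntegrableOn (riK p q) (Set.Ico a b ×ˢ Set.Ico c d) :=
    integrableOn_ker p q hδ (measurableSet_Ico.prod measurableSet_Ico)
      (vol_rect_ne_top a b c d hsub) (fun y hy => hbdd y (hsub hy))
  have hInt' : IntegrableOn (riK p q) (Set.Ico a b ×ˢ Set.Ico c d)
      ((volume : Measure ℝ).prod volume) := by
    rwa [← Measure.volume_eq_prod]
  have fub := setIntegral_prod (riK p q) hInt'
  rw [← Measure.volume_eq_prod] at fub
  rw [fub, ← outer_step p q hab.le hqc hqd]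
  apply setIntegral_congr_fun measurableSet_Ico
  intro y1 hy1
  have hne : ∀ t ∈ Set.Icc c d, (p - y1) ^ 2 + (q - t) ^ 2 ≠ 0 := fun t ht =>
    ne_of_gt (lt_of_lt_of_le (by positivity)
      (hbdd (y1, t) ⟨Set.Ico_subset_Icc_self hy1, ht⟩))
  have h := inner_full (p - y1) q hcd.le hne
  simpa [riK, g1] using h

lemma interior_value (p q : ℝ) {a b c d ε : ℝ} (hqc : q ≠ c) (hqd : q ≠ d)
    (hab : a < b) (hε : 0 < ε)
    (h1 : ε < p - a) (h2 : ε < b - p) (h3 : ε < q - c) (h4 : ε < d - q) :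
    ∫ y in (Set.Ico a b ×ˢ Set.Ico c d) \ (Set.Icc (p-ε) (p+ε) ×ˢ Set.Icc (q-ε) (q+ε)),
        riK p q y = formVal p q a b c d := by
  set B1 : Set ℝ := Set.Ico c d \ Set.Icc (q-ε) (q+ε) with hB1
  set A2 : Set ℝ := Set.Ico a b \ Set.Icc (p-ε) (p+ε) with hA2
  have hset : (Set.Ico a b ×ˢ Set.Ico c d) \ (Set.Icc (p-ε) (p+ε) ×ˢ Set.Icc (q-ε) (q+ε))
      = (Set.Ico a b ×ˢ B1) ∪ (A2 ×ˢ Set.Icc (q-ε) (q+ε)) := by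
    ext ⟨y1, y2⟩
    simp only [Set.mem_diff, Set.mem_prod, Set.mem_union, hB1, hA2]
    constructor
    · rintro ⟨⟨hy1, hy2⟩, h⟩
      by_cases hq : y2 ∈ Set.Icc (q-ε) (q+ε)
      · exact Or.inr ⟨⟨hy1, fun hp' => h ⟨hp', hq⟩⟩, hq⟩
      · exact Or.inl ⟨hy1, hy2, hq⟩
    · rintro (⟨hy1, hy2, hq⟩ | ⟨⟨hy1, hp'⟩, hq⟩)
      · exact ⟨⟨hy1, hy2⟩, fun hb' => hq hb'.2⟩
      · refine ⟨⟨hy1, ⟨by linarith [hq.1], by linarith [hq.2]⟩⟩, fun hb' => hp' hb'.1⟩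
  have hm1 : MeasurableSet ((Set.Ico a b ×ˢ B1 : Set (ℝ × ℝ))) :=
    measurableSet_Ico.prod (measurableSet_Ico.diff measurableSet_Icc)
  have hm2 : MeasurableSet ((A2 ×ˢ Set.Icc (q-ε) (q+ε) : Set (ℝ × ℝ))) :=
    (measurableSet_Ico.diff measurableSet_Icc).prod measurableSet_Icc
  have hsub1 : (Set.Ico a b ×ˢ B1 : Set (ℝ × ℝ)) ⊆ Set.Icc a b ×ˢ Set.Icc c d :=
    Set.prod_mono Set.Ico_subset_Icc_self
      ((Set.diff_subset).trans Set.Ico_subset_Icc_self)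
  have hsub2 : (A2 ×ˢ Set.Icc (q-ε) (q+ε) : Set (ℝ × ℝ)) ⊆ Set.Icc a b ×ˢ Set.Icc c d :=
    Set.prod_mono ((Set.diff_subset).trans Set.Ico_subset_Icc_self)
      (Set.Icc_subset_Icc (by linarith) (by linarith))
  have hI1 : IntegrableOn (riK p q) (Set.Ico a b ×ˢ B1) := by
    apply integrableOn_ker p q hε hm1 (vol_rect_ne_top a b c d hsub1)
    rintro ⟨y1, y2⟩ ⟨_, hy2, hq⟩
    have : y2 < q - ε ∨ q + ε < y2 := by
      by_contra hcon
      push_neg at hcon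
      exact hq ⟨hcon.1, hcon.2⟩
    rcases this with h' | h' <;> nlinarith [sq_nonneg (p - y1)]
  have hI2 : IntegrableOn (riK p q) (A2 ×ˢ Set.Icc (q-ε) (q+ε)) := by
    apply integrableOn_ker p q hε hm2 (vol_rect_ne_top a b c d hsub2)
    rintro ⟨y1, y2⟩ ⟨⟨_, hp'⟩, _⟩
    have : y1 < p - ε ∨ p + ε < y1 := by
      by_contra hcon
      push_neg at hcon
      exact hp' ⟨hcon.1, hcon.2⟩
    rcases this with h' | h' <;> nlinarith [sq_nonneg (q - y2)]
  have hdisj : Disjoint ((Set.Ico a b ×ˢ B1 : Set (ℝ × ℝ))) (A2 ×ˢ Set.Icc (q-ε) (q+ε)) := by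
    rw [Set.disjoint_left]
    rintro ⟨y1, y2⟩ ⟨_, _, hq⟩ ⟨_, hq'⟩
    exact hq hq'
  rw [hset, setIntegral_union hdisj hm2 hI1 hI2]
  -- piece 2 is zero
  have hI2' : IntegrableOn (riK p q) (A2 ×ˢ Set.Icc (q-ε) (q+ε))
      ((volume : Measure ℝ).prod volume) := by rwa [← Measure.volume_eq_prod]
  have fub2 := setIntegral_prod (riK p q) hI2'
  rw [← Measure.volume_eq_prod] at fub2
  have hzero : ∫ y in A2 ×ˢ Set.Icc (q-ε) (q+ε), riK p q y = 0 := by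
    rw [fub2]
    have : ∀ y1 ∈ A2, (∫ y2 in Set.Icc (q-ε) (q+ε), riK p q (y1, y2)) = 0 := by
      intro y1 hy1
      have hs : p - y1 ≠ 0 := by
        rcases hy1 with ⟨_, hp'⟩
        have : y1 < p - ε ∨ p + ε < y1 := by
          by_contra hcon
          push_neg at hcon
          exact hp' ⟨hcon.1, hcon.2⟩
        rcases this with h' | h' <;> intro hcon <;> nlinarith
      have h := inner_zero (p - y1) q hs hε.le
      simpa [riK] using h
    rw [setIntegral_congr_fun (measurableSet_Ico.diff measurableSet_Icc) this]
    simp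
  rw [hzero, add_zero]
  -- piece 1
  have hI1' : IntegrableOn (riK p q) (Set.Ico a b ×ˢ B1)
      ((volume : Measure ℝ).prod volume) := by rwa [← Measure.volume_eq_prod]
  have fub1 := setIntegral_prod (riK p q) hI1'
  rw [← Measure.volume_eq_prod] at fub1
  rw [fub1, ← outer_step p q hab.le hqc hqd]
  apply setIntegral_congr_fun measurableSet_Ico
  intro y1 hy1
  have h := inner_annulus (p - y1) q (c := c) (d := d) hε (by linarith) (by linarith)
  simpa [riK, g1, hB1] using h

lemma outside_case (p q : ℝ) {a b c d ε δ : ℝ} (hab : a < b) (hcd : c < d)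
    (hqc : q ≠ c) (hqd : q ≠ d) (hδ : 0 < δ)
    (hbdd : ∀ y ∈ (Set.Icc a b ×ˢ Set.Icc c d : Set (ℝ × ℝ)),
      δ ^ 2 ≤ (p - y.1) ^ 2 + (q - y.2) ^ 2)
    (hdisj : Disjoint (Set.Icc (p-ε) (p+ε) ×ˢ Set.Icc (q-ε) (q+ε) : Set (ℝ × ℝ))
      (Set.Ico a b ×ˢ Set.Ico c d)) :
    ∫ y in (Set.Ico a b ×ˢ Set.Ico c d) \ (Set.Icc (p-ε) (p+ε) ×ˢ Set.Icc (q-ε) (q+ε)),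
        riK p q y = formVal p q a b c d := by
  rw [sdiff_eq_self_iff_disjoint.2 hdisj]
  exact rect_value p q hab hcd hqc hqd hδ hbdd

noncomputable def c2 : ℝ := Real.Gamma (3 / 2) / Real.pi ^ ((3 : ℝ) / 2)

lemma c2_pos : 0 < c2 :=
  div_pos (Real.Gamma_pos_of_pos (by norm_num)) (Real.rpow_pos_of_pos Real.pi_pos _)

theorem stmt10 :
    ∃ C : ℝ, 0 < C ∧
      ∀ a b c d : ℝ, a < b → c < d →
        ∀ x : ℝ × ℝ, x ∉ frontier (Set.Ico a b ×ˢ Set.Ico c d) → x.2 ≠ c → x.2 ≠ d →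
          Tendsto (R2trunc a b c d x) (nhdsWithin 0 (Set.Ioi 0))
            (nhds (C * ((Real.arsinh ((x.1 - a) / |x.2 - d|) -
                          Real.arsinh ((x.1 - b) / |x.2 - d|)) -
                        (Real.arsinh ((x.1 - a) / |x.2 - c|) -
                          Real.arsinh ((x.1 - b) / |x.2 - c|))))) := by
  refine ⟨c2, c2_pos, ?_⟩
  intro a b c d hab hcd x hx hqc hqd
  set p := x.1 with hp
  set q := x.2 with hq
  suffices hev : ∃ ε₀ > 0, ∀ ε ∈ Set.Ioo (0:ℝ) ε₀,
      R2trunc a b c d x ε = c2 * formVal p q a b c d by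
    obtain ⟨ε₀, hε₀, hval⟩ := hev
    have ht : Tendsto (R2trunc a b c d x) (nhdsWithin 0 (Set.Ioi 0))
        (nhds (c2 * formVal p q a b c d)) := by
      apply Tendsto.congr' _ tendsto_const_nhds
      filter_upwards [Ioo_mem_nhdsGT hε₀] with ε hε
      exact (hval ε hε).symm
    simpa only [formVal] using ht
  have hred : ∀ ε : ℝ,
      R2trunc a b c d x ε = c2 *
        ∫ y in (Set.Ico a b ×ˢ Set.Ico c d) \ Metric.closedBall x ε, riK p q y := by
    intro ε
    rw [R2trunc, c2]
    simp only [mul_div_assoc]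
    rw [MeasureTheory.integral_const_mul]
    rfl
  have hball : ∀ ε : ℝ,
      Metric.closedBall x ε = Set.Icc (p-ε) (p+ε) ×ˢ Set.Icc (q-ε) (q+ε) := by
    intro ε
    rw [← Prod.mk.eta (p := x), ← closedBall_prod_same, Real.closedBall_eq_Icc,
      Real.closedBall_eq_Icc]
  have hfr : x ∈ Set.Ioo a b ×ˢ Set.Ioo c d ∨ x ∉ Set.Icc a b ×ˢ Set.Icc c d := by
    by_cases hi : x ∈ interior (Set.Ico a b ×ˢ Set.Ico c d)
    · left; rwa [interior_prod_eq, interior_Ico, interior_Ico] at hi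
    · right; intro hcl
      exact hx ⟨by rwa [closure_prod_eq, closure_Ico hab.ne, closure_Ico hcd.ne], hi⟩
  rcases hfr with hint | hout
  · obtain ⟨⟨hpa, hpb⟩, hqc', hqd'⟩ := hint
    refine ⟨min (min (p - a) (b - p)) (min (q - c) (d - q)), by
      simp only [lt_min_iff]
      exact ⟨⟨by linarith, by linarith⟩, by linarith, by linarith⟩, ?_⟩
    rintro ε ⟨hε0, hεlt⟩
    simp only [lt_min_iff] at hεlt
    rw [hred, hball]
    congr 1
    exact interior_value p q hqc hqd hab hε0 hεlt.1.1 hεlt.1.2 hεlt.2.1 hεlt.2.2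
  · have hcases : p < a ∨ b < p ∨ q < c ∨ d < q := by
      by_contra hcon
      push_neg at hcon
      obtain ⟨h1', h2', h3', h4'⟩ := hcon
      exact hout ⟨⟨h1', h2'⟩, h3', h4'⟩
    have main : ∀ ε₀ : ℝ, 0 < ε₀ →
        (∀ y ∈ (Set.Icc a b ×ˢ Set.Icc c d : Set (ℝ × ℝ)),
          ε₀ ^ 2 ≤ (p - y.1) ^ 2 + (q - y.2) ^ 2) →
        (∀ ε, 0 < ε → ε < ε₀ →
          Disjoint (Set.Icc (p-ε) (p+ε) ×ˢ Set.Icc (q-ε) (q+ε) : Set (ℝ × ℝ))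
            (Set.Ico a b ×ˢ Set.Ico c d)) →
        ∃ ε₀ > 0, ∀ ε ∈ Set.Ioo (0:ℝ) ε₀,
          R2trunc a b c d x ε = c2 * formVal p q a b c d := by
      intro ε₀ hε₀ hbdd hdisj
      refine ⟨ε₀, hε₀, ?_⟩
      rintro ε ⟨hε0, hεlt⟩
      rw [hred, hball]
      congr 1
      exact outside_case p q hab hcd hqc hqd hε₀ hbdd (hdisj ε hε0 hεlt)
    rcases hcases with h' | h' | h' | h'
    · refine main (a - p) (by linarith) ?_ ?_
      · rintro ⟨y1, y2⟩ ⟨⟨hy1, _⟩, _⟩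
        simp only
        nlinarith [sq_nonneg (q - y2)]
      · intro ε hε0 hεlt
        rw [Set.disjoint_left]
        rintro ⟨y1, y2⟩ ⟨⟨_, hy1b⟩, _⟩ ⟨⟨hy1a, _⟩, _⟩
        simp only at *
        linarith
    · refine main (p - b) (by linarith) ?_ ?_
      · rintro ⟨y1, y2⟩ ⟨⟨_, hy1⟩, _⟩
        simp only
        nlinarith [sq_nonneg (q - y2)]
      · intro ε hε0 hεlt
        rw [Set.disjoint_left]
        rintro ⟨y1, y2⟩ ⟨⟨hy1a, _⟩, _⟩ ⟨⟨_, hy1b⟩, _⟩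
        simp only at *
        linarith
    · refine main (c - q) (by linarith) ?_ ?_
      · rintro ⟨y1, y2⟩ ⟨_, ⟨hy2, _⟩⟩
        simp only
        nlinarith [sq_nonneg (p - y1)]
      · intro ε hε0 hεlt
        rw [Set.disjoint_left]
        rintro ⟨y1, y2⟩ ⟨_, ⟨_, hy2b⟩⟩ ⟨_, ⟨hy2a, _⟩⟩
        simp only at *
        linarith
    · refine main (q - d) (by linarith) ?_ ?_
      · rintro ⟨y1, y2⟩ ⟨_, ⟨_, hy2⟩⟩
        simp only
        nlinarith [sq_nonneg (p - y1)]
      · intro ε hε0 hεlt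
        rw [Set.disjoint_left]
        rintro ⟨y1, y2⟩ ⟨_, ⟨hy2a, _⟩⟩ ⟨_, ⟨_, hy2b⟩⟩
        simp only at *
        linarith
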